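/- Let N be a finite network based on a finite connected simple graph X with vertex set V and capacity function c. Then there exist a finite tree T (a connected acyclic simple graph), a capacity function c' assigning a positive integer to each edge of T, and an injective map ν : V → VT such that: (1) for all distinct vertices s, t of X, the minimum of c(A) over all cuts A of X with s ∈ A and t ∈ A* equals the minimum of c'(B) over all cuts B of T with νs ∈ B and νt ∈ B*; and (2) for every edge e' of T there are distinct vertices s, t of X such that e' lies on the unique path in T from νs to νt and c'(e') equals the minimum of c(A) over all cuts A of X separating s and t. -/

import Mathlib

open Classical

/-- The set of edges of `G` with one endpoint in `A` and one in the complement of `A`. -/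
def cutEdges {V : Type*} (G : SimpleGraph V) (A : Set V) : Set (Sym2 V) :=
  {e | e ∈ G.edgeSet ∧ ∃ u v, e = s(u, v) ∧ u ∈ A ∧ v ∉ A}

/-- The capacity of a cut: the sum of the capacities of the edges across it. -/
noncomputable def cutCap {V : Type*} (G : SimpleGraph V) (c : Sym2 V → ℕ) (A : Set V) : ℕ :=
  ∑ᶠ e ∈ cutEdges G A, c e

/-- A cut in a finite graph: a nonempty proper subset of the vertices. -/
def IsCut {V : Type*} (A : Set V) : Prop :=
  A ≠ ∅ ∧ A ≠ Set.univ

section CutLemmas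
variable {V : Type*} {G : SimpleGraph V} {A : Set V} {c : Sym2 V → ℕ}
lemma cutEdges_finite [Finite V] : (cutEdges G A).Finite := by
  have : Fintype V := Fintype.ofFinite V
  exact Set.toFinite _
lemma le_cutCap [Finite V] {e : Sym2 V} (he : e ∈ cutEdges G A) : c e ≤ cutCap G c A := by
  rw [cutCap, finsum_mem_eq_finite_toFinset_sum _ (cutEdges_finite (G := G) (A := A))]
  exact Finset.single_le_sum (fun i _ => Nat.zero_le _) (by simpa using he)
lemma cutEdges_compl : cutEdges G Aᶜ = cutEdges G A := by
  ext e
  constructor <;> rintro ⟨hE, u, v, rfl, hu, hv⟩ <;>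
    exact ⟨hE, v, u, Sym2.eq_swap, by simpa using hv, by simpa using hu⟩
lemma cutCap_compl : cutCap G c Aᶜ = cutCap G c A := by rw [cutCap, cutCap, cutEdges_compl]
lemma IsCut.compl (h : IsCut A) : IsCut Aᶜ := by
  obtain ⟨h1, h2⟩ := h
  refine ⟨?_, ?_⟩
  · simpa [Set.compl_empty_iff] using h2
  · intro hcl; exact h1 (by simpa [Set.compl_univ_iff] using hcl)
lemma cross_mem_cutEdges {u v : V} (h : G.Adj u v) (hu : u ∈ A) (hv : v ∉ A) :
    s(u, v) ∈ cutEdges G A := ⟨G.mem_edgeSet.2 h, u, v, rfl, hu, hv⟩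
lemma exists_cross_adj (hG : G.Preconnected) {s t : V} (hs : s ∈ A) (ht : t ∉ A) :
    ∃ u v, G.Adj u v ∧ u ∈ A ∧ v ∉ A := by
  obtain ⟨w⟩ := hG s t
  clear hG
  induction w with
  | nil => exact absurd hs ht
  | @cons a b d h w ih =>
    by_cases hb : b ∈ A
    · exact ih hb ht
    · exact ⟨a, b, h, hs, hb⟩
end CutLemmas

private lemma list_head_ne_getLast {α : Type*} {l : List α} (hnd : l.Nodup)
    (hl : 2 ≤ l.length) (h : l.head? = l.getLast?) : False := by
  match l with
  | [] => simp at hl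
  | [a] => simp at hl
  | a :: b :: t =>
    rw [List.getLast?_cons_cons, List.head?_cons] at h
    have h2 : (b :: t).getLast? = some a := h.symm
    obtain ⟨hne, ha⟩ := List.mem_getLast?_eq_getLast (Option.mem_def.mpr h2)
    have hmem : a ∈ b :: t := ha ▸ List.getLast_mem hne
    exact (List.nodup_cons.mp hnd).1 hmem

theorem exists_flow_tree {n : ℕ} (hn : 0 < n) (Λ : Fin n → Fin n → ℕ)
    (hsymm : ∀ i j, Λ i j = Λ j i)
    (htri : ∀ i j k : Fin n, i ≠ k → min (Λ i j) (Λ j k) ≤ Λ i k)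
    (c' : Sym2 (Fin n) → ℕ) (hc' : ∀ a b, c' s(a, b) = Λ a b) :
    ∃ T : SimpleGraph (Fin n), T.IsTree ∧
      (∀ i j : Fin n, ∀ B : Set (Fin n), i ∈ B → j ∉ B → Λ i j ≤ cutCap T c' B) ∧
      (∀ i j : Fin n, i ≠ j → ∃ B, IsCut B ∧ i ∈ B ∧ j ∉ B ∧ cutCap T c' B = Λ i j) := by
  classical
  set z0 : Fin n := ⟨0, hn⟩ with hz0
  -- parent function
  have hex : ∀ a : Fin n, ∃ b : Fin n,
      (a.val = 0 → b = a) ∧ (a.val ≠ 0 → b < a ∧ ∀ j : Fin n, j < a → Λ a j ≤ Λ a b) := by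
    intro a
    by_cases ha : a.val = 0
    · exact ⟨a, fun _ => rfl, fun h => absurd ha h⟩
    · obtain ⟨b, hb, hmax⟩ := Finset.exists_max_image (Finset.univ.filter (· < a))
        (fun j => Λ a j) ⟨z0, Finset.mem_filter.2 ⟨Finset.mem_univ _, show z0 < a from Fin.lt_def.2 (Nat.pos_of_ne_zero ha)⟩⟩
      refine ⟨b, fun h => absurd h ha, fun _ => ⟨(Finset.mem_filter.mp hb).2, fun j hj => ?_⟩⟩
      exact hmax j (by simp [Finset.mem_filter, hj])
  choose p hp0 hpspec using hex
  have hplt : ∀ a : Fin n, a.val ≠ 0 → p a < a := fun a ha => (hpspec a ha).1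
  have hpmax : ∀ a j : Fin n, j < a → Λ a j ≤ Λ a (p a) := by
    intro a j hj
    have ha : a.val ≠ 0 := by
      have : j.val < a.val := hj
      omega
    exact (hpspec a ha).2 j hj
  set T : SimpleGraph (Fin n) := SimpleGraph.fromRel (fun x y => x.val ≠ 0 ∧ p x = y) with hT
  have hadj_iff : ∀ x y : Fin n, T.Adj x y ↔
      x ≠ y ∧ ((x.val ≠ 0 ∧ p x = y) ∨ (y.val ≠ 0 ∧ p y = x)) := by
    intro x y; rw [hT, SimpleGraph.fromRel_adj]
  have hadjP : ∀ a : Fin n, a.val ≠ 0 → T.Adj a (p a) := by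
    intro a ha
    exact (hadj_iff a (p a)).2 ⟨(hplt a ha).ne', Or.inl ⟨ha, rfl⟩⟩
  -- descendants
  set D : Fin n → Set (Fin n) := fun a => {x | ∃ k : ℕ, p^[k] x = a} with hD
  have hple : ∀ x : Fin n, p x ≤ x := by
    intro x
    by_cases hx : x.val = 0
    · rw [hp0 x hx]
    · exact (hplt x hx).le
  have hiter_le : ∀ (k : ℕ) (x : Fin n), p^[k] x ≤ x := by
    intro k
    induction k with
    | zero => intro x; exact le_refl x
    | succ k ih =>
      intro x
      rw [Function.iterate_succ_apply]
      exact le_trans (ih (p x)) (hple x)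
  have hDself : ∀ a : Fin n, a ∈ D a := fun a => ⟨0, rfl⟩
  have hD_le : ∀ a x : Fin n, x ∈ D a → a ≤ x := by
    rintro a x ⟨k, rfl⟩
    exact hiter_le k x
  have hD_step : ∀ a x : Fin n, a ≠ x → (x ∈ D a ↔ p x ∈ D a) := by
    intro a x hax
    constructor
    · rintro ⟨k, hk⟩
      cases k with
      | zero => exact absurd hk.symm hax
      | succ k => exact ⟨k, by rwa [Function.iterate_succ_apply] at hk⟩
    · rintro ⟨k, hk⟩
      exact ⟨k + 1, by rwa [Function.iterate_succ_apply]⟩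
  have hD_pnot : ∀ a : Fin n, a.val ≠ 0 → p a ∉ D a := by
    intro a ha hmem
    exact absurd (hD_le a (p a) hmem) (not_le.2 (hplt a ha))
  have hz_not : ∀ a : Fin n, a.val ≠ 0 → z0 ∉ D a := by
    intro a ha ⟨k, hk⟩
    have hz : ∀ m : ℕ, p^[m] z0 = z0 := by
      intro m
      induction m with
      | zero => rfl
      | succ m ih => rw [Function.iterate_succ_apply, hp0 z0 rfl, ih]
    rw [hz k] at hk
    exact ha (by rw [← hk])
  have hcutD : ∀ a : Fin n, a.val ≠ 0 → cutEdges T (D a) = {s(a, p a)} := by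
    intro a ha
    ext e
    constructor
    · rintro ⟨hE, u, v, rfl, hu, hv⟩
      have hadj : T.Adj u v := (SimpleGraph.mem_edgeSet T).1 hE
      obtain ⟨hne, h | h⟩ := (hadj_iff u v).1 hadj
      · rcases eq_or_ne a u with rfl | hau
        · rw [Set.mem_singleton_iff, h.2]
        · exact absurd (((hD_step a u hau).1 hu)) (h.2 ▸ hv)
      · have hav : a ≠ v := fun hh => hv (hh ▸ hDself a)
        exact absurd ((hD_step a v hav).2 (h.2.symm ▸ hu)) hv
    · rintro rfl
      exact cross_mem_cutEdges (hadjP a ha) (hDself a) (hD_pnot a ha)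
  have hcapD : ∀ a : Fin n, a.val ≠ 0 → cutCap T c' (D a) = Λ a (p a) := by
    intro a ha
    rw [cutCap, hcutD a ha, finsum_mem_singleton, hc']
  have hDcut : ∀ a : Fin n, a.val ≠ 0 → IsCut (D a) := by
    intro a ha
    refine ⟨fun hh => ?_, fun hh => hz_not a ha (hh ▸ Set.mem_univ z0)⟩
    exact (Set.eq_empty_iff_forall_notMem.mp hh) a (hDself a)
  -- connectivity
  have hreach : ∀ a : Fin n, T.Reachable a z0 := by
    have key : ∀ (m : ℕ) (a : Fin n), a.val ≤ m → T.Reachable a z0 := by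
      intro m
      induction m with
      | zero =>
        intro a ha
        have : a = z0 := Fin.ext (Nat.le_zero.mp ha)
        rw [this]
      | succ m ih =>
        intro a ha
        by_cases h0 : a.val = 0
        · have : a = z0 := Fin.ext h0
          rw [this]
        · exact (hadjP a h0).reachable.trans
            (ih (p a) (by have := hplt a h0; omega))
    exact fun a => key a.val a le_rfl
  have hconn : T.Connected := by
    rw [SimpleGraph.connected_iff]
    exact ⟨fun a b => (hreach a).trans (hreach b).symm, ⟨z0⟩⟩
  -- acyclicity
  have hacyc : T.IsAcyclic := by
    intro v w hw
    have hvs : v ∈ w.support := w.start_mem_support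
    have hne : w.support.toFinset.Nonempty := ⟨v, List.mem_toFinset.2 hvs⟩
    set m : Fin n := w.support.toFinset.max' hne with hm
    have hm_mem : m ∈ w.support := List.mem_toFinset.1 (w.support.toFinset.max'_mem hne)
    have hm_max : ∀ x ∈ w.support, x ≤ m :=
      fun x hx => w.support.toFinset.le_max' x (List.mem_toFinset.2 hx)
    set cyc := w.rotate m hm_mem with hcycdef
    have hcyc : cyc.IsCycle := hw.rotate hm_mem
    have hsub : ∀ x ∈ cyc.support, x ≤ m := by
      intro x hx
      rw [cyc.support_eq_cons] at hx
      rcases List.mem_cons.1 hx with rfl | hx'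
      · exact le_rfl
      · have hperm := SimpleGraph.Walk.support_rotate w m hm_mem
        have : x ∈ w.support.tail := hperm.mem_iff.1 hx'
        exact hm_max x (by rw [w.support_eq_cons]; exact List.mem_cons_of_mem _ this)
    -- first-edge lemma
    have firstEdge : ∀ q : T.Walk m m, q ≠ SimpleGraph.Walk.nil →
        (∀ x ∈ q.support, x ≤ m) → q.edges.head? = some s(m, p m) := by
      intro q
      cases q with
      | nil => intro hq _; exact absurd rfl hq
      | @cons _ x _ h q' =>
        intro _ hmax
        have hxs : x ≤ m := by
          apply hmax
          rw [SimpleGraph.Walk.support_cons]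
          exact List.mem_cons_of_mem _ q'.start_mem_support
        obtain ⟨hne', hor⟩ := (hadj_iff m x).1 h
        have hx : x = p m := by
          rcases hor with h1 | h1
          · exact h1.2.symm
          · exact absurd (h1.2 ▸ hplt x h1.1) (not_lt.2 hxs)
        rw [SimpleGraph.Walk.edges_cons, List.head?_cons, hx]
    have h1 : cyc.edges.head? = some s(m, p m) :=
      firstEdge cyc hcyc.ne_nil hsub
    have h2 : cyc.edges.getLast? = some s(m, p m) := by
      have hrne : cyc.reverse ≠ SimpleGraph.Walk.nil := by
        intro hh
        have : cyc.reverse.length = 0 := by rw [hh]; rfl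
        rw [SimpleGraph.Walk.length_reverse] at this
        have := hcyc.three_le_length
        omega
      have := firstEdge cyc.reverse hrne (by
        intro x hx
        rw [SimpleGraph.Walk.support_reverse, List.mem_reverse] at hx
        exact hsub x hx)
      rwa [SimpleGraph.Walk.edges_reverse, List.head?_reverse] at this
    have hnd : cyc.edges.Nodup := hcyc.edges_nodup
    have hlen : 2 ≤ cyc.edges.length := by
      rw [SimpleGraph.Walk.length_edges]
      have := hcyc.three_le_length
      omega
    exact list_head_ne_getLast hnd hlen (h1.trans h2.symm)
  -- lower bound for all cuts
  have S1 : ∀ m : ℕ, ∀ i j : Fin n, ∀ B : Set (Fin n),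
      max i.val j.val = m → i ∈ B → j ∉ B → Λ i j ≤ cutCap T c' B := by
    intro m
    induction m using Nat.strong_induction_on with
    | _ m IH =>
      intro i j B hm hi hj
      have hij : i ≠ j := fun h => hj (h ▸ hi)
      rcases lt_trichotomy i j with hlt | heq | hgt
      · have hj0 : j.val ≠ 0 := by
          have : i.val < j.val := hlt
          omega
        set w := p j with hwdef
        have hwj : w < j := hplt j hj0
        by_cases hwB : w ∈ B
        · have hcross : s(w, j) ∈ cutEdges T B :=
            cross_mem_cutEdges ((hadjP j hj0).symm) hwB hj
          calc Λ i j = Λ j i := hsymm i j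
            _ ≤ Λ j w := hpmax j i hlt
            _ = Λ w j := hsymm j w
            _ = c' s(w, j) := (hc' w j).symm
            _ ≤ cutCap T c' B := le_cutCap hcross
        · have hiw : i ≠ w := fun h => hwB (h ▸ hi)
          have hm' : max i.val w.val < m := by
            subst hm
            have h1 : i.val < j.val := hlt
            have h2 : w.val < j.val := hwj
            omega
          refine le_trans ?_ (IH _ hm' i w B rfl hi hwB)
          have h3 : Λ i j ≤ Λ j w := by
            rw [hsymm i j]
            exact hpmax j i hlt
          have h2 : min (Λ i j) (Λ j w) ≤ Λ i w := htri i j w hiw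
          rwa [min_eq_left h3] at h2
      · exact absurd heq hij
      · have hi0 : i.val ≠ 0 := by
          have : j.val < i.val := hgt
          omega
        set w := p i with hwdef
        have hwi : w < i := hplt i hi0
        by_cases hwB : w ∈ B
        · have hwj : w ≠ j := fun h => hj (h ▸ hwB)
          have hm' : max w.val j.val < m := by
            subst hm
            have h1 : j.val < i.val := hgt
            have h2 : w.val < i.val := hwi
            omega
          refine le_trans ?_ (IH _ hm' w j B rfl hwB hj)
          have h3 : Λ i j ≤ Λ w i := by
            rw [hsymm w i]
            exact hpmax i j hgt
          have h2 : min (Λ w i) (Λ i j) ≤ Λ w j := htri w i j hwj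
          rwa [min_eq_right h3] at h2
        · have hcross : s(i, w) ∈ cutEdges T B :=
            cross_mem_cutEdges (hadjP i hi0) hi hwB
          calc Λ i j ≤ Λ i w := hpmax i j hgt
            _ = c' s(i, w) := (hc' i w).symm
            _ ≤ cutCap T c' B := le_cutCap hcross
  -- existence of a realizing fundamental cut
  have S2 : ∀ m : ℕ, ∀ i j : Fin n, max i.val j.val = m → i ≠ j →
      ∃ a : Fin n, a.val ≠ 0 ∧ a.val ≤ m ∧ Λ a (p a) = Λ i j ∧ (i ∈ D a ↔ j ∉ D a) := by
    intro m
    induction m using Nat.strong_induction_on with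
    | _ m IH =>
      intro i j hm hij
      rcases lt_trichotomy i j with hlt | heq | hgt
      · have hj0 : j.val ≠ 0 := by
          have : i.val < j.val := hlt
          omega
        set w := p j with hwdef
        have h1 : Λ j i ≤ Λ j w := hpmax j i hlt
        rcases eq_or_lt_of_le h1 with heq1 | hlt1
        · refine ⟨j, hj0, by omega, ?_, ?_⟩
          · rw [← hwdef, ← heq1]
            exact hsymm j i
          · have hiD : i ∉ D j := fun h => absurd (hD_le j i h) (not_le.2 hlt)
            exact iff_of_false hiD (fun h => h (hDself j))
        · have hwi : w ≠ i := fun h => absurd hlt1 (by rw [h]; exact lt_irrefl _)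
          have ha1 : Λ i j ≤ Λ w i := by
            have h2 : min (Λ w j) (Λ j i) ≤ Λ w i := htri w j i hwi
            have h3 : Λ j i ≤ Λ w j := by
              rw [hsymm w j]
              exact hlt1.le
            rw [min_eq_right h3] at h2
            rw [hsymm i j]
            exact h2
          have ha2 : Λ w i ≤ Λ i j := by
            have h2 : min (Λ i w) (Λ w j) ≤ Λ i j := htri i w j hij
            rcases min_le_iff.1 h2 with h | h
            · rw [hsymm w i]
              exact h
            · exfalso
              rw [hsymm w j] at h
              rw [hsymm i j] at h
              exact absurd h (not_le.2 hlt1)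
          have haeq : Λ w i = Λ i j := le_antisymm ha2 ha1
          have hm' : max w.val i.val < m := by
            subst hm
            have h4 : i.val < j.val := hlt
            have h5 : w.val < j.val := hplt j hj0
            omega
          obtain ⟨a, ha0, ham, haval, haiff⟩ := IH _ hm' w i rfl hwi
          have haj : a ≠ j := by
            intro h
            subst hm
            have h4 : i.val < j.val := hlt
            have h5 : w.val < j.val := hplt j hj0
            rw [h] at ham
            omega
          have hstep := hD_step a j haj
          rw [← hwdef] at hstep
          refine ⟨a, ha0, by omega, by rw [haval]; exact haeq, ?_⟩
          tauto
      · exact absurd heq hij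
      · have hi0 : i.val ≠ 0 := by
          have : j.val < i.val := hgt
          omega
        set w := p i with hwdef
        have h1 : Λ i j ≤ Λ i w := hpmax i j hgt
        rcases eq_or_lt_of_le h1 with heq1 | hlt1
        · refine ⟨i, hi0, by omega, ?_, ?_⟩
          · rw [← hwdef, ← heq1]
          · exact iff_of_true (hDself i) (fun h => absurd (hD_le i j h) (not_le.2 hgt))
        · have hwj : w ≠ j := fun h => absurd hlt1 (by rw [h]; exact lt_irrefl _)
          have ha1 : Λ i j ≤ Λ w j := by
            have h2 : min (Λ w i) (Λ i j) ≤ Λ w j := htri w i j hwj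
            have h3 : Λ i j ≤ Λ w i := by
              rw [hsymm w i]
              exact hlt1.le
            rw [min_eq_right h3] at h2
            exact h2
          have ha2 : Λ w j ≤ Λ i j := by
            have h2 : min (Λ i w) (Λ w j) ≤ Λ i j := htri i w j hij
            rcases min_le_iff.1 h2 with h | h
            · exact absurd h (not_le.2 hlt1)
            · exact h
          have haeq : Λ w j = Λ i j := le_antisymm ha2 ha1
          have hm' : max w.val j.val < m := by
            subst hm
            have h4 : j.val < i.val := hgt
            have h5 : w.val < i.val := hplt i hi0
            omega
          obtain ⟨a, ha0, ham, haval, haiff⟩ := IH _ hm' w j rfl hwj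
          have hai : a ≠ i := by
            intro h
            subst hm
            have h4 : j.val < i.val := hgt
            have h5 : w.val < i.val := hplt i hi0
            rw [h] at ham
            omega
          have hstep := hD_step a i hai
          rw [← hwdef] at hstep
          refine ⟨a, ha0, by omega, by rw [haval]; exact haeq, ?_⟩
          tauto
  refine ⟨T, ⟨hconn, hacyc⟩, ?_, ?_⟩
  · intro i j B hi hj
    exact S1 (max i.val j.val) i j B rfl hi hj
  · intro i j hij
    obtain ⟨a, ha0, _, haval, haiff⟩ := S2 (max i.val j.val) i j rfl hij
    by_cases hiD : i ∈ D a
    · exact ⟨D a, hDcut a ha0, hiD, haiff.1 hiD, by rw [hcapD a ha0, haval]⟩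
    · have hjD : j ∈ D a := by
        by_contra h
        exact hiD (haiff.2 h)
      refine ⟨(D a)ᶜ, (hDcut a ha0).compl, hiD, fun hh => hh hjD, ?_⟩
      rw [cutCap_compl, hcapD a ha0, haval]

section Lam
variable {V : Type*} (G : SimpleGraph V) (c : Sym2 V → ℕ)

private noncomputable def lamFn (s t : V) : ℕ :=
  sInf {k : ℕ | ∃ A : Set V, IsCut A ∧ s ∈ A ∧ t ∉ A ∧ cutCap G c A = k}

private lemma lamFn_set_symm (s t : V) :
    {k : ℕ | ∃ A : Set V, IsCut A ∧ s ∈ A ∧ t ∉ A ∧ cutCap G c A = k}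
      = {k : ℕ | ∃ A : Set V, IsCut A ∧ t ∈ A ∧ s ∉ A ∧ cutCap G c A = k} := by
  ext k
  constructor <;> rintro ⟨A, hA, hs, ht, rfl⟩ <;>
    exact ⟨Aᶜ, hA.compl, by simpa using ht, by simpa using hs, cutCap_compl⟩

private lemma lamFn_symm (s t : V) : lamFn G c s t = lamFn G c t s :=
  congrArg sInf (lamFn_set_symm G c s t)

private lemma lamFn_mem {s t : V} (hst : s ≠ t) :
    cutCap G c {s} ∈ {k : ℕ | ∃ A : Set V, IsCut A ∧ s ∈ A ∧ t ∉ A ∧ cutCap G c A = k} := by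
  refine ⟨{s}, ⟨Set.singleton_ne_empty s, fun h => ?_⟩, rfl, fun h => hst (Set.mem_singleton_iff.1 h).symm, rfl⟩
  have : t ∈ ({s} : Set V) := h ▸ Set.mem_univ t
  exact hst (Set.mem_singleton_iff.1 this).symm

private lemma lamFn_spec {s t : V} (hst : s ≠ t) :
    ∃ A : Set V, IsCut A ∧ s ∈ A ∧ t ∉ A ∧ cutCap G c A = lamFn G c s t :=
  Nat.sInf_mem ⟨_, lamFn_mem G c hst⟩

private lemma lamFn_le {s t : V} {A : Set V} (hA : IsCut A) (hs : s ∈ A) (ht : t ∉ A) :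
    lamFn G c s t ≤ cutCap G c A :=
  Nat.sInf_le ⟨A, hA, hs, ht, rfl⟩

private lemma lamFn_pos [Finite V] (hG : G.Connected) (hc : ∀ e ∈ G.edgeSet, 0 < c e)
    {s t : V} (hst : s ≠ t) : 0 < lamFn G c s t := by
  obtain ⟨A, hA, hs, ht, hcap⟩ := lamFn_spec G c hst
  obtain ⟨u, v, huv, hu, hv⟩ := exists_cross_adj hG.preconnected hs ht
  rw [← hcap]
  exact lt_of_lt_of_le (hc _ ((G.mem_edgeSet).2 huv)) (le_cutCap (cross_mem_cutEdges huv hu hv))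

private lemma lamFn_tri {s t u : V} (hsu : s ≠ u) :
    min (lamFn G c s t) (lamFn G c t u) ≤ lamFn G c s u := by
  obtain ⟨A, hA, hs, hu', hcap⟩ := lamFn_spec G c hsu
  by_cases htA : t ∈ A
  · exact le_trans (min_le_right _ _) (hcap ▸ lamFn_le G c hA htA hu')
  · exact le_trans (min_le_left _ _) (hcap ▸ lamFn_le G c hA hs htA)

end Lam


/-- For every finite network there is a network based on a tree `T`, with positive
integer capacities, and an injective map `ν` from the vertices of `X` to those of `T`,
such that minimal cut capacities between pairs of vertices agree in `X` and `T`, and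
every edge of `T` realizes the minimal cut capacity between some pair of vertices of
`X` whose images it separates. -/
theorem structure_tree_for_finite_network {V : Type*} [Fintype V] (G : SimpleGraph V)
    (hG : G.Connected) (c : Sym2 V → ℕ) (hc : ∀ e ∈ G.edgeSet, 0 < c e) :
    ∃ (W : Type) (_ : Fintype W) (T : SimpleGraph W) (c' : Sym2 W → ℕ) (ν : V → W),
      T.IsTree ∧
      (∀ e ∈ T.edgeSet, 0 < c' e) ∧
      Function.Injective ν ∧
      (∀ s t : V, s ≠ t →
        sInf {k : ℕ | ∃ A : Set V, IsCut A ∧ s ∈ A ∧ t ∉ A ∧ cutCap G c A = k} =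
          sInf {k : ℕ | ∃ B : Set W, IsCut B ∧ ν s ∈ B ∧ ν t ∉ B ∧ cutCap T c' B = k}) ∧
      (∀ e ∈ T.edgeSet, ∃ s t : V, s ≠ t ∧
        (∀ p : T.Walk (ν s) (ν t), p.IsPath → e ∈ p.edges) ∧
        c' e = sInf {k : ℕ | ∃ A : Set V, IsCut A ∧
          ((s ∈ A ∧ t ∉ A) ∨ (t ∈ A ∧ s ∉ A)) ∧ cutCap G c A = k}) := by
  classical
  have hne : Nonempty V := hG.nonempty
  have hnpos : 0 < Fintype.card V := Fintype.card_pos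
  set n := Fintype.card V with hn
  set eV : V ≃ Fin n := Fintype.equivFin V with heV
  set Lam : Fin n → Fin n → ℕ := fun i j => lamFn G c (eV.symm i) (eV.symm j) with hLam
  have hLsymm : ∀ i j, Lam i j = Lam j i := fun i j => lamFn_symm G c _ _
  have hLtri : ∀ i j k : Fin n, i ≠ k → min (Lam i j) (Lam j k) ≤ Lam i k := by
    intro i j k hik
    exact lamFn_tri G c (fun h => hik (eV.symm.injective h))
  set c' : Sym2 (Fin n) → ℕ := Sym2.lift ⟨fun i j => Lam i j, fun i j => hLsymm i j⟩ with hc'def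
  have hc' : ∀ a b, c' s(a, b) = Lam a b := fun a b => by rw [hc'def, Sym2.lift_mk]
  obtain ⟨T, htree, hS1, hS2⟩ := exists_flow_tree hnpos Lam hLsymm hLtri c' hc'
  refine ⟨Fin n, inferInstance, T, c', ⇑eV, htree, ?_, eV.injective, ?_, ?_⟩
  · -- positivity
    intro e he
    induction e using Sym2.ind with
    | _ a b =>
      have hadj : T.Adj a b := (T.mem_edgeSet).1 he
      rw [hc']
      exact lamFn_pos G c hG hc (fun h => hadj.ne (eV.symm.injective h))
  · -- minimal cuts agree
    intro s t hst
    have hij : eV s ≠ eV t := fun h => hst (eV.injective h)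
    have hLst : Lam (eV s) (eV t) = lamFn G c s t := by
      rw [hLam]
      simp
    obtain ⟨B, hB, hiB, hjB, hcapB⟩ := hS2 (eV s) (eV t) hij
    show lamFn G c s t = _
    refine le_antisymm ?_ (Nat.sInf_le ⟨B, hB, hiB, hjB, by rw [hcapB, hLst]⟩)
    refine le_csInf ⟨_, B, hB, hiB, hjB, rfl⟩ ?_
    rintro k ⟨B', hB', hi', hj', rfl⟩
    rw [← hLst]
    exact hS1 _ _ B' hi' hj'
  · -- every tree edge realizes a minimal cut
    intro e he
    induction e using Sym2.ind with
    | _ a b =>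
      have hadj : T.Adj a b := (T.mem_edgeSet).1 he
      refine ⟨eV.symm a, eV.symm b, fun h => hadj.ne (eV.symm.injective h), ?_, ?_⟩
      · intro q hq
        have hadj' : T.Adj (eV (eV.symm a)) (eV (eV.symm b)) := by simpa using hadj
        have huniq := htree.IsAcyclic.path_unique ⟨q, hq⟩ (SimpleGraph.Path.singleton hadj')
        have hq' : q = (SimpleGraph.Path.singleton hadj').val := congrArg Subtype.val huniq
        rw [hq']
        simp [SimpleGraph.Path.singleton]
      · have hsym2 : {k : ℕ | ∃ A : Set V, IsCut A ∧
            ((eV.symm a ∈ A ∧ eV.symm b ∉ A) ∨ (eV.symm b ∈ A ∧ eV.symm a ∉ A)) ∧ cutCap G c A = k}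
            = {k : ℕ | ∃ A : Set V, IsCut A ∧ eV.symm a ∈ A ∧ eV.symm b ∉ A ∧ cutCap G c A = k} := by
          ext k
          constructor
          · rintro ⟨A, hA, h | h, rfl⟩
            · exact ⟨A, hA, h.1, h.2, rfl⟩
            · exact ⟨Aᶜ, hA.compl, by simpa using h.2, by simpa using h.1, cutCap_compl⟩
          · rintro ⟨A, hA, h1, h2, rfl⟩
            exact ⟨A, hA, Or.inl ⟨h1, h2⟩, rfl⟩
        rw [hsym2, hc']
        rfl
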